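/- Let Φ(x,λ) be the Weyl solution of L, i.e. the m×m matrix solution of −Y'' + Q(x)Y = λY with U(Φ) = I_m and V(Φ) = 0_m, and let Φ*(x,λ) be the m×m matrix solution of −Z'' + Z Q(x) = λZ with U*(Φ*) = I_m and V*(Φ*) = 0_m. Then M(λ) := Φ(0,λ) and M*(λ) := Φ*(0,λ) coincide identically: M(λ) ≡ M*(λ) for all λ at which both are defined. -/

import Mathlib

set_option autoImplicit false
set_option maxHeartbeats 1000000

open MeasureTheory Filter Topology Matrix Set intervalIntegral

noncomputable section

attribute [local instance] Matrix.linftyOpNormedAddCommGroup Matrix.linftyOpNormedSpace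
  Matrix.linftyOpNormedRing Matrix.linftyOpNormedAlgebra

/-- Square complex matrices of size `m`. -/
abbrev Mat (m : ℕ) := Matrix (Fin m) (Fin m) ℂ

/-- Principal square root of a complex number (branch with nonnegative real part). -/
def csqrt (z : ℂ) : ℂ := z ^ ((1 : ℂ)/2)

/-- `Y` (with derivative `Y'`) is a matrix solution of `-Y'' + Q Y = λ Y`, in integrated form. -/
def IsMatSol {m : ℕ} (Q : ℝ → Mat m) (lam : ℂ) (Y Y' : ℝ → Mat m) : Prop :=
  (∀ x : ℝ, HasDerivAt Y (Y' x) x) ∧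
  (∀ x : ℝ, Y' x = Y' 0 + ∫ t in (0:ℝ)..x, (Q t * Y t - lam • Y t))

/-- every singularity of `F` is (at most) a simple pole. -/
def AllPolesSimple {m : ℕ} (F : ℂ → Mat m) : Prop :=
  ∀ z₀ : ℂ, ∃ A : Mat m, Filter.Tendsto (fun z => (z - z₀) • F z) (𝓝[≠] z₀) (𝓝 A)

/-- `A` is the residue of `F` at the simple pole `z₀`. -/
def IsResidueAt {m : ℕ} (F : ℂ → Mat m) (z₀ : ℂ) (A : Mat m) : Prop :=
  Filter.Tendsto (fun z => (z - z₀) • F z) (𝓝[≠] z₀) (𝓝 A)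

/-- `Z` (with derivative `Z'`) is a matrix solution of `-Z'' + Z Q = λ Z` (adjoint form). -/
def IsMatSolR {m : ℕ} (Q : ℝ → Mat m) (lam : ℂ) (Z Z' : ℝ → Mat m) : Prop :=
  (∀ x : ℝ, HasDerivAt Z (Z' x) x) ∧
  (∀ x : ℝ, Z' x = Z' 0 + ∫ t in (0:ℝ)..x, (Z t * Q t - lam • Z t))

instance matContinuousENorm (m : ℕ) : ContinuousENorm (Mat m) :=
  SeminormedAddGroup.toContinuousENorm

instance matENormedAddCommMonoid (m : ℕ) : ENormedAddCommMonoid (Mat m) :=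
  NormedAddCommGroup.toENormedAddCommMonoid

instance matPseudoMetrizableSpace (m : ℕ) : TopologicalSpace.PseudoMetrizableSpace (Mat m) :=
  PseudoEMetricSpace.pseudoMetrizableSpace

namespace St9Aux

variable {m : ℕ}

lemma matIntegral_mul_left (μ : Measure ℝ) (c : Mat m) {f : ℝ → Mat m}
    (hf : Integrable f μ) : ∫ x, c * f x ∂μ = c * ∫ x, f x ∂μ := by
  simpa using
    (ContinuousLinearMap.integral_comp_comm (ContinuousLinearMap.mul ℂ (Mat m) c) hf)

lemma matIntegral_mul_right (μ : Measure ℝ) (c : Mat m) {f : ℝ → Mat m}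
    (hf : Integrable f μ) : ∫ x, f x * c ∂μ = (∫ x, f x ∂μ) * c := by
  simpa using
    (ContinuousLinearMap.integral_comp_comm ((ContinuousLinearMap.mul ℂ (Mat m)).flip c) hf)

/-- Triangle Fubini, version with `C t * D s`. -/
lemma tri_swap (b : ℝ) (C D : ℝ → Mat m)
    (hC : IntegrableOn C (Ioc 0 b) volume) (hD : IntegrableOn D (Ioc 0 b) volume) :
    ∫ t in Ioc (0:ℝ) b, (∫ s in Ioc t b, C t * D s) =
      ∫ s in Ioc (0:ℝ) b, ((∫ t in Ioc 0 s, C t) * D s) := by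
  set μ : Measure ℝ := volume.restrict (Ioc 0 b) with hμ
  set F : ℝ → ℝ → Mat m := fun t s => if t < s then C t * D s else 0 with hF
  have huncurry : Function.uncurry F =
      Set.indicator {p : ℝ × ℝ | p.1 < p.2} (fun p : ℝ × ℝ => C p.1 * D p.2) := by
    ext p
    by_cases hp : p.1 < p.2
    · simp [hF, Function.uncurry, hp, Set.indicator_of_mem, Set.mem_setOf_eq]
    · simp [hF, Function.uncurry, hp, Set.indicator_of_notMem, Set.mem_setOf_eq]
  have hsetm : MeasurableSet {p : ℝ × ℝ | p.1 < p.2} :=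
    measurableSet_lt measurable_fst measurable_snd
  have hprodm : AEStronglyMeasurable (fun p : ℝ × ℝ => C p.1 * D p.2) (μ.prod μ) :=
    (hC.aestronglyMeasurable.comp_fst).mul (hD.aestronglyMeasurable.comp_snd)
  have hFm : AEStronglyMeasurable (Function.uncurry F) (μ.prod μ) := by
    rw [huncurry]; exact hprodm.indicator hsetm
  have hbound : Integrable (fun p : ℝ × ℝ => ‖C p.1‖ * ‖D p.2‖) (μ.prod μ) :=
    hC.norm.mul_prod hD.norm
  have hFint : Integrable (Function.uncurry F) (μ.prod μ) := by
    refine hbound.mono' hFm ?_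
    refine Eventually.of_forall fun p => ?_
    by_cases hp : p.1 < p.2
    · simp only [Function.uncurry, hF, if_pos hp]
      exact norm_mul_le _ _
    · simp only [Function.uncurry, hF, if_neg hp, norm_zero]
      positivity
  have hswap := MeasureTheory.integral_integral_swap hFint
  have hL : ∫ t, (∫ s, F t s ∂μ) ∂μ = ∫ t in Ioc (0:ℝ) b, (∫ s in Ioc t b, C t * D s) := by
    rw [hμ]
    refine setIntegral_congr_fun measurableSet_Ioc fun t ht => ?_
    have h1 : (fun s => F t s) = Set.indicator (Ioi t) (fun s => C t * D s) := by
      ext s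
      by_cases hs : t < s
      · simp [hF, hs, Set.indicator_of_mem, Set.mem_Ioi]
      · simp [hF, hs, Set.indicator_of_notMem, Set.mem_Ioi]
    rw [h1, setIntegral_indicator measurableSet_Ioi]
    congr 1
    rw [Set.Ioc_inter_Ioi, max_eq_right ht.1.le]
  have hR : ∫ s, (∫ t, F t s ∂μ) ∂μ = ∫ s in Ioc (0:ℝ) b, ((∫ t in Ioc 0 s, C t) * D s) := by
    rw [hμ]
    refine setIntegral_congr_fun measurableSet_Ioc fun s hs => ?_
    have h1 : (fun t => F t s) = Set.indicator (Iio s) (fun t => C t * D s) := by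
      ext t
      by_cases ht : t < s
      · simp [hF, ht, Set.indicator_of_mem, Set.mem_Iio]
      · simp [hF, ht, Set.indicator_of_notMem, Set.mem_Iio]
    rw [h1, setIntegral_indicator measurableSet_Iio]
    have h2 : Ioc (0:ℝ) b ∩ Iio s = Ioo 0 s := by
      ext t
      constructor
      · rintro ⟨⟨ht0, _⟩, hts⟩; exact ⟨ht0, hts⟩
      · rintro ⟨ht0, hts⟩; exact ⟨⟨ht0, le_trans hts.le hs.2⟩, hts⟩
    rw [h2, Measure.restrict_congr_set Ioo_ae_eq_Ioc,
      matIntegral_mul_right _ (D s) (hC.mono_set (Set.Ioc_subset_Ioc_right hs.2))]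
  rw [← hL, ← hR]
  exact hswap

/-- Triangle Fubini, version with `D s * C t`. -/
lemma tri_swap' (b : ℝ) (C D : ℝ → Mat m)
    (hC : IntegrableOn C (Ioc 0 b) volume) (hD : IntegrableOn D (Ioc 0 b) volume) :
    ∫ t in Ioc (0:ℝ) b, (∫ s in Ioc t b, D s * C t) =
      ∫ s in Ioc (0:ℝ) b, (D s * (∫ t in Ioc 0 s, C t)) := by
  set μ : Measure ℝ := volume.restrict (Ioc 0 b) with hμ
  set F : ℝ → ℝ → Mat m := fun t s => if t < s then D s * C t else 0 with hF
  have huncurry : Function.uncurry F =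
      Set.indicator {p : ℝ × ℝ | p.1 < p.2} (fun p : ℝ × ℝ => D p.2 * C p.1) := by
    ext p
    by_cases hp : p.1 < p.2
    · simp [hF, Function.uncurry, hp, Set.indicator_of_mem, Set.mem_setOf_eq]
    · simp [hF, Function.uncurry, hp, Set.indicator_of_notMem, Set.mem_setOf_eq]
  have hsetm : MeasurableSet {p : ℝ × ℝ | p.1 < p.2} :=
    measurableSet_lt measurable_fst measurable_snd
  have hprodm : AEStronglyMeasurable (fun p : ℝ × ℝ => D p.2 * C p.1) (μ.prod μ) :=
    (hD.aestronglyMeasurable.comp_snd).mul (hC.aestronglyMeasurable.comp_fst)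
  have hFm : AEStronglyMeasurable (Function.uncurry F) (μ.prod μ) := by
    rw [huncurry]; exact hprodm.indicator hsetm
  have hbound : Integrable (fun p : ℝ × ℝ => ‖C p.1‖ * ‖D p.2‖) (μ.prod μ) :=
    hC.norm.mul_prod hD.norm
  have hFint : Integrable (Function.uncurry F) (μ.prod μ) := by
    refine hbound.mono' hFm ?_
    refine Eventually.of_forall fun p => ?_
    by_cases hp : p.1 < p.2
    · simp only [Function.uncurry, hF, if_pos hp]
      calc ‖D p.2 * C p.1‖ ≤ ‖D p.2‖ * ‖C p.1‖ := norm_mul_le _ _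
        _ = ‖C p.1‖ * ‖D p.2‖ := mul_comm _ _
    · simp only [Function.uncurry, hF, if_neg hp, norm_zero]
      positivity
  have hswap := MeasureTheory.integral_integral_swap hFint
  have hL : ∫ t, (∫ s, F t s ∂μ) ∂μ = ∫ t in Ioc (0:ℝ) b, (∫ s in Ioc t b, D s * C t) := by
    rw [hμ]
    refine setIntegral_congr_fun measurableSet_Ioc fun t ht => ?_
    have h1 : (fun s => F t s) = Set.indicator (Ioi t) (fun s => D s * C t) := by
      ext s
      by_cases hs : t < s
      · simp [hF, hs, Set.indicator_of_mem, Set.mem_Ioi]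
      · simp [hF, hs, Set.indicator_of_notMem, Set.mem_Ioi]
    rw [h1, setIntegral_indicator measurableSet_Ioi]
    congr 1
    rw [Set.Ioc_inter_Ioi, max_eq_right ht.1.le]
  have hR : ∫ s, (∫ t, F t s ∂μ) ∂μ = ∫ s in Ioc (0:ℝ) b, (D s * (∫ t in Ioc 0 s, C t)) := by
    rw [hμ]
    refine setIntegral_congr_fun measurableSet_Ioc fun s hs => ?_
    have h1 : (fun t => F t s) = Set.indicator (Iio s) (fun t => D s * C t) := by
      ext t
      by_cases ht : t < s
      · simp [hF, ht, Set.indicator_of_mem, Set.mem_Iio]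
      · simp [hF, ht, Set.indicator_of_notMem, Set.mem_Iio]
    rw [h1, setIntegral_indicator measurableSet_Iio]
    have h2 : Ioc (0:ℝ) b ∩ Iio s = Ioo 0 s := by
      ext t
      constructor
      · rintro ⟨⟨ht0, _⟩, hts⟩; exact ⟨ht0, hts⟩
      · rintro ⟨ht0, hts⟩; exact ⟨⟨ht0, le_trans hts.le hs.2⟩, hts⟩
    rw [h2, Measure.restrict_congr_set Ioo_ae_eq_Ioc,
      matIntegral_mul_left _ (D s) (hC.mono_set (Set.Ioc_subset_Ioc_right hs.2))]
  rw [← hL, ← hR]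
  exact hswap

lemma integrableOn_mul_cont_right (b : ℝ) (g φ : ℝ → Mat m)
    (hg : IntegrableOn g (Ioc 0 b) volume) (hφ : ContinuousOn φ (Icc 0 b)) :
    IntegrableOn (fun t => g t * φ t) (Ioc 0 b) volume := by
  obtain ⟨M, hM⟩ := (isCompact_Icc (a := (0:ℝ)) (b := b)).exists_bound_of_continuousOn hφ
  refine (hg.norm.mul_const M).mono'
    (hg.aestronglyMeasurable.mul
      ((hφ.mono Ioc_subset_Icc_self).aestronglyMeasurable measurableSet_Ioc)) ?_
  refine (ae_restrict_iff' measurableSet_Ioc).2 (Eventually.of_forall fun t ht => ?_)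
  calc ‖g t * φ t‖ ≤ ‖g t‖ * ‖φ t‖ := norm_mul_le _ _
    _ ≤ ‖g t‖ * M := mul_le_mul_of_nonneg_left (hM t (Ioc_subset_Icc_self ht)) (norm_nonneg _)

lemma integrableOn_mul_cont_left (b : ℝ) (g φ : ℝ → Mat m)
    (hg : IntegrableOn g (Ioc 0 b) volume) (hφ : ContinuousOn φ (Icc 0 b)) :
    IntegrableOn (fun t => φ t * g t) (Ioc 0 b) volume := by
  obtain ⟨M, hM⟩ := (isCompact_Icc (a := (0:ℝ)) (b := b)).exists_bound_of_continuousOn hφ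
  refine (hg.norm.mul_const M).mono'
    (((hφ.mono Ioc_subset_Icc_self).aestronglyMeasurable measurableSet_Ioc).mul
      hg.aestronglyMeasurable) ?_
  refine (ae_restrict_iff' measurableSet_Ioc).2 (Eventually.of_forall fun t ht => ?_)
  calc ‖φ t * g t‖ ≤ ‖φ t‖ * ‖g t‖ := norm_mul_le _ _
    _ ≤ M * ‖g t‖ :=
        mul_le_mul_of_nonneg_right (hM t (Ioc_subset_Icc_self ht)) (norm_nonneg _)
    _ = ‖g t‖ * M := mul_comm _ _

/-- Weak integration by parts, right version. -/
lemma parts_right (b : ℝ) (g f f' : ℝ → Mat m)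
    (hg : IntegrableOn g (Ioc 0 b) volume)
    (hf : ∀ x, HasDerivAt f (f' x) x)
    (hf' : IntegrableOn f' (Ioc 0 b) volume) :
    (∫ t in Ioc (0:ℝ) b, g t) * f b =
      (∫ t in Ioc (0:ℝ) b, g t * f t) +
        ∫ s in Ioc (0:ℝ) b, ((∫ t in Ioc 0 s, g t) * f' s) := by
  have hfc : Continuous f := continuous_iff_continuousAt.2 fun x => (hf x).continuousAt
  have key : ∀ t ∈ Ioc (0:ℝ) b, f b - f t = ∫ s in Ioc t b, f' s := by
    intro t ht
    have hii : IntervalIntegrable f' volume t b := by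
      rw [intervalIntegrable_iff_integrableOn_Ioc_of_le ht.2]
      exact hf'.mono_set (Ioc_subset_Ioc_left ht.1.le)
    have h3 := intervalIntegral.integral_eq_sub_of_hasDerivAt (fun x _ => hf x) hii
    rw [intervalIntegral.integral_of_le ht.2] at h3
    exact h3.symm
  have hint1 : IntegrableOn (fun t => g t * f t) (Ioc 0 b) volume :=
    integrableOn_mul_cont_right b g f hg hfc.continuousOn
  have hint2 : IntegrableOn (fun t => g t * (f b - f t)) (Ioc 0 b) volume :=
    integrableOn_mul_cont_right b g _ hg (continuous_const.sub hfc).continuousOn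
  have e1 : (∫ t in Ioc (0:ℝ) b, g t) * f b = ∫ t in Ioc (0:ℝ) b, g t * f b :=
    (matIntegral_mul_right _ (f b) hg).symm
  have e2 : ∫ t in Ioc (0:ℝ) b, g t * f b
      = ∫ t in Ioc (0:ℝ) b, (g t * f t + g t * (f b - f t)) := by
    refine setIntegral_congr_fun measurableSet_Ioc fun t _ => ?_
    rw [← mul_add]
    congr 1
    abel
  have e3 : ∫ t in Ioc (0:ℝ) b, (g t * f t + g t * (f b - f t))
      = (∫ t in Ioc (0:ℝ) b, g t * f t) + ∫ t in Ioc (0:ℝ) b, g t * (f b - f t) :=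
    integral_add hint1 hint2
  have e4 : ∫ t in Ioc (0:ℝ) b, g t * (f b - f t)
      = ∫ t in Ioc (0:ℝ) b, (∫ s in Ioc t b, g t * f' s) := by
    refine setIntegral_congr_fun measurableSet_Ioc fun t ht => ?_
    rw [key t ht, matIntegral_mul_left _ (g t) (hf'.mono_set (Ioc_subset_Ioc_left ht.1.le))]
  rw [e1, e2, e3, e4, tri_swap b g f' hg hf']

/-- Weak integration by parts, left version. -/
lemma parts_left (b : ℝ) (g f f' : ℝ → Mat m)
    (hg : IntegrableOn g (Ioc 0 b) volume)
    (hf : ∀ x, HasDerivAt f (f' x) x)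
    (hf' : IntegrableOn f' (Ioc 0 b) volume) :
    f b * (∫ t in Ioc (0:ℝ) b, g t) =
      (∫ t in Ioc (0:ℝ) b, f t * g t) +
        ∫ s in Ioc (0:ℝ) b, (f' s * (∫ t in Ioc 0 s, g t)) := by
  have hfc : Continuous f := continuous_iff_continuousAt.2 fun x => (hf x).continuousAt
  have key : ∀ t ∈ Ioc (0:ℝ) b, f b - f t = ∫ s in Ioc t b, f' s := by
    intro t ht
    have hii : IntervalIntegrable f' volume t b := by
      rw [intervalIntegrable_iff_integrableOn_Ioc_of_le ht.2]
      exact hf'.mono_set (Ioc_subset_Ioc_left ht.1.le)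
    have h3 := intervalIntegral.integral_eq_sub_of_hasDerivAt (fun x _ => hf x) hii
    rw [intervalIntegral.integral_of_le ht.2] at h3
    exact h3.symm
  have hint1 : IntegrableOn (fun t => f t * g t) (Ioc 0 b) volume :=
    integrableOn_mul_cont_left b g f hg hfc.continuousOn
  have hint2 : IntegrableOn (fun t => (f b - f t) * g t) (Ioc 0 b) volume :=
    integrableOn_mul_cont_left b g _ hg (continuous_const.sub hfc).continuousOn
  have e1 : f b * (∫ t in Ioc (0:ℝ) b, g t) = ∫ t in Ioc (0:ℝ) b, f b * g t :=
    (matIntegral_mul_left _ (f b) hg).symm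
  have e2 : ∫ t in Ioc (0:ℝ) b, f b * g t
      = ∫ t in Ioc (0:ℝ) b, (f t * g t + (f b - f t) * g t) := by
    refine setIntegral_congr_fun measurableSet_Ioc fun t _ => ?_
    rw [← add_mul]
    congr 1
    abel
  have e3 : ∫ t in Ioc (0:ℝ) b, (f t * g t + (f b - f t) * g t)
      = (∫ t in Ioc (0:ℝ) b, f t * g t) + ∫ t in Ioc (0:ℝ) b, (f b - f t) * g t :=
    integral_add hint1 hint2
  have e4 : ∫ t in Ioc (0:ℝ) b, (f b - f t) * g t
      = ∫ t in Ioc (0:ℝ) b, (∫ s in Ioc t b, f' s * g t) := by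
    refine setIntegral_congr_fun measurableSet_Ioc fun t ht => ?_
    rw [key t ht, matIntegral_mul_right _ (g t) (hf'.mono_set (Ioc_subset_Ioc_left ht.1.le))]
  rw [e1, e2, e3, e4, tri_swap' b g f' hg hf']

/-- The potential is integrable on `(0, π]`. -/
lemma integrableOn_Q (Q : ℝ → Mat m)
    (hQL2 : ∀ j k : Fin m, MemLp (fun x => Q x j k) 2 (volume.restrict (Set.Ioo 0 Real.pi))) :
    IntegrableOn Q (Ioc 0 Real.pi) volume := by
  have hfin : IsFiniteMeasure (volume.restrict (Ioo (0:ℝ) Real.pi)) := by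
    constructor
    rw [Measure.restrict_apply_univ]
    exact measure_Ioo_lt_top
  have hent : ∀ j k : Fin m, Integrable (fun x => Q x j k)
      (volume.restrict (Ioo (0:ℝ) Real.pi)) := fun j k =>
    (hQL2 j k).integrable (by norm_num)
  have hIoo : IntegrableOn Q (Ioo 0 Real.pi) volume := by
    have hQeq : Q = fun x => ∑ j : Fin m, ∑ k : Fin m,
        Matrix.single j k (Q x j k) := by
      funext x
      exact matrix_eq_sum_single (Q x)
    rw [hQeq]
    refine integrable_finset_sum _ fun j _ => ?_
    refine integrable_finset_sum _ fun k _ => ?_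
    have hsb : (fun x => Matrix.single j k (Q x j k))
        = fun x => (Q x j k) • Matrix.single j k (1:ℂ) := by
      funext x
      rw [Matrix.smul_single, smul_eq_mul, mul_one]
    rw [hsb]
    exact (hent j k).smul_const _
  exact hIoo.congr_set_ae Ioo_ae_eq_Ioc.symm |>.mono_set (le_refl _)

end St9Aux

/-- the Weyl matrices of `L` and of the adjoint-form problem `L*` coincide:
`M(λ) = Φ(0,λ)` equals `M*(λ) = Φ*(0,λ)` for every `λ` at which both Weyl solutions exist. -/
theorem statement9
    (m : ℕ) (hm : 1 ≤ m)
    (Q : ℝ → Mat m)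
    (hQL2 : ∀ j k : Fin m, MemLp (fun x => Q x j k) 2 (volume.restrict (Set.Ioo 0 Real.pi)))
    (h H : Mat m) (lam : ℂ)
    -- the Weyl solution Φ of L at λ : U(Φ) = I, V(Φ) = 0
    (Φ Φ' : ℝ → Mat m)
    (hΦsol : IsMatSol Q lam Φ Φ')
    (hΦU : Φ' 0 - h * Φ 0 = 1)
    (hΦV : Φ' Real.pi + H * Φ Real.pi = 0)
    -- the Weyl solution Φ* of L* at λ : U*(Φ*) = I, V*(Φ*) = 0
    (Φs Φs' : ℝ → Mat m)
    (hΦssol : IsMatSolR Q lam Φs Φs')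
    (hΦsU : Φs' 0 - Φs 0 * h = 1)
    (hΦsV : Φs' Real.pi + Φs Real.pi * H = 0) :
    Φ 0 = Φs 0 := by
  classical
  obtain ⟨hΦd, hΦe⟩ := hΦsol
  obtain ⟨hΨd, hΨe⟩ := hΦssol
  have hπ : (0:ℝ) ≤ Real.pi := Real.pi_pos.le
  set g1 : ℝ → Mat m := fun t => Q t * Φ t - lam • Φ t with hg1def
  set g2 : ℝ → Mat m := fun t => Φs t * Q t - lam • Φs t with hg2def
  have hΦc : Continuous Φ := continuous_iff_continuousAt.2 fun x => (hΦd x).continuousAt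
  have hΨc : Continuous Φs := continuous_iff_continuousAt.2 fun x => (hΨd x).continuousAt
  have hQint : IntegrableOn Q (Ioc 0 Real.pi) volume := St9Aux.integrableOn_Q Q hQL2
  have hg1int : IntegrableOn g1 (Ioc 0 Real.pi) volume := by
    refine (St9Aux.integrableOn_mul_cont_right Real.pi Q Φ hQint hΦc.continuousOn).sub ?_
    exact (hΦc.const_smul lam).integrableOn_Ioc
  have hg2int : IntegrableOn g2 (Ioc 0 Real.pi) volume := by
    refine (St9Aux.integrableOn_mul_cont_left Real.pi Q Φs hQint hΨc.continuousOn).sub ?_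
    exact (hΨc.const_smul lam).integrableOn_Ioc
  have hΦ'eq : ∀ x ∈ Icc (0:ℝ) Real.pi, Φ' x = Φ' 0 + ∫ t in Ioc 0 x, g1 t := by
    intro x hx
    rw [hΦe x, intervalIntegral.integral_of_le hx.1]
  have hΨ'eq : ∀ x ∈ Icc (0:ℝ) Real.pi, Φs' x = Φs' 0 + ∫ t in Ioc 0 x, g2 t := by
    intro x hx
    rw [hΨe x, intervalIntegral.integral_of_le hx.1]
  have hg1Icc : IntegrableOn g1 (Icc 0 Real.pi) volume :=
    hg1int.congr_set_ae Ioc_ae_eq_Icc.symm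
  have hg2Icc : IntegrableOn g2 (Icc 0 Real.pi) volume :=
    hg2int.congr_set_ae Ioc_ae_eq_Icc.symm
  have hΦ'cont : ContinuousOn Φ' (Icc 0 Real.pi) := by
    refine ContinuousOn.congr (continuousOn_const.add
      (intervalIntegral.continuousOn_primitive hg1Icc)) fun x hx => hΦ'eq x hx
  have hΨ'cont : ContinuousOn Φs' (Icc 0 Real.pi) := by
    refine ContinuousOn.congr (continuousOn_const.add
      (intervalIntegral.continuousOn_primitive hg2Icc)) fun x hx => hΨ'eq x hx
  have hΦ'int : IntegrableOn Φ' (Ioc 0 Real.pi) volume :=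
    hΦ'cont.integrableOn_Icc.mono_set Ioc_subset_Icc_self
  have hΨ'int : IntegrableOn Φs' (Ioc 0 Real.pi) volume :=
    hΨ'cont.integrableOn_Icc.mono_set Ioc_subset_Icc_self
  have hI1 : ∫ s in Ioc (0:ℝ) Real.pi, Φ' s = Φ Real.pi - Φ 0 := by
    have hii : IntervalIntegrable Φ' volume 0 Real.pi :=
      (intervalIntegrable_iff_integrableOn_Ioc_of_le hπ).2 hΦ'int
    have h3 := intervalIntegral.integral_eq_sub_of_hasDerivAt
      (f := Φ) (f' := Φ') (a := 0) (b := Real.pi) (fun x _ => hΦd x) hii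
    rw [intervalIntegral.integral_of_le hπ] at h3
    exact h3
  have hI2 : ∫ s in Ioc (0:ℝ) Real.pi, Φs' s = Φs Real.pi - Φs 0 := by
    have hii : IntervalIntegrable Φs' volume 0 Real.pi :=
      (intervalIntegrable_iff_integrableOn_Ioc_of_le hπ).2 hΨ'int
    have h3 := intervalIntegral.integral_eq_sub_of_hasDerivAt
      (f := Φs) (f' := Φs') (a := 0) (b := Real.pi) (fun x _ => hΨd x) hii
    rw [intervalIntegral.integral_of_le hπ] at h3
    exact h3
  have hJ1 : ∫ t in Ioc (0:ℝ) Real.pi, g1 t = Φ' Real.pi - Φ' 0 := by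
    rw [hΦ'eq Real.pi ⟨hπ, le_rfl⟩, add_sub_cancel_left]
  have hJ2 : ∫ t in Ioc (0:ℝ) Real.pi, g2 t = Φs' Real.pi - Φs' 0 := by
    rw [hΨ'eq Real.pi ⟨hπ, le_rfl⟩, add_sub_cancel_left]
  -- parts
  have hP1 := St9Aux.parts_right Real.pi g2 Φ Φ' hg2int hΦd hΦ'int
  have hP2 := St9Aux.parts_left Real.pi g1 Φs Φs' hg1int hΨd hΨ'int
  -- integrability of Φs' * Φ'
  have hSS : IntegrableOn (fun s => Φs' s * Φ' s) (Ioc 0 Real.pi) volume :=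
    ((hΨ'cont.mul hΦ'cont).integrableOn_Icc).mono_set Ioc_subset_Icc_self
  set S : Mat m := ∫ s in Ioc (0:ℝ) Real.pi, Φs' s * Φ' s with hSdef
  -- rewrite the double-primitive integrals
  have hrw1 : ∫ s in Ioc (0:ℝ) Real.pi, ((∫ t in Ioc 0 s, g2 t) * Φ' s)
      = S - Φs' 0 * (Φ Real.pi - Φ 0) := by
    have e1 : ∫ s in Ioc (0:ℝ) Real.pi, ((∫ t in Ioc 0 s, g2 t) * Φ' s)
        = ∫ s in Ioc (0:ℝ) Real.pi, (Φs' s * Φ' s - Φs' 0 * Φ' s) := by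
      refine setIntegral_congr_fun measurableSet_Ioc fun s hs => ?_
      have h4 := hΨ'eq s ⟨hs.1.le, hs.2⟩
      have h5 : ∫ t in Ioc (0:ℝ) s, g2 t = Φs' s - Φs' 0 := by
        rw [h4, add_sub_cancel_left]
      rw [h5, sub_mul]
    rw [e1, integral_sub hSS (hΦ'int.const_mul _),
      St9Aux.matIntegral_mul_left _ _ hΦ'int, hI1]
  have hrw2 : ∫ s in Ioc (0:ℝ) Real.pi, (Φs' s * (∫ t in Ioc 0 s, g1 t))
      = S - (Φs Real.pi - Φs 0) * Φ' 0 := by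
    have e1 : ∫ s in Ioc (0:ℝ) Real.pi, (Φs' s * (∫ t in Ioc 0 s, g1 t))
        = ∫ s in Ioc (0:ℝ) Real.pi, (Φs' s * Φ' s - Φs' s * Φ' 0) := by
      refine setIntegral_congr_fun measurableSet_Ioc fun s hs => ?_
      have h4 := hΦ'eq s ⟨hs.1.le, hs.2⟩
      have h5 : ∫ t in Ioc (0:ℝ) s, g1 t = Φ' s - Φ' 0 := by
        rw [h4, add_sub_cancel_left]
      rw [h5, mul_sub]
    rw [e1, integral_sub hSS (hΨ'int.mul_const _),
      St9Aux.matIntegral_mul_right _ _ hΨ'int, hI2]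
  -- common middle integral
  have hpt : ∫ t in Ioc (0:ℝ) Real.pi, g2 t * Φ t = ∫ t in Ioc (0:ℝ) Real.pi, Φs t * g1 t := by
    refine setIntegral_congr_fun measurableSet_Ioc fun t _ => ?_
    show (Φs t * Q t - lam • Φs t) * Φ t = Φs t * (Q t * Φ t - lam • Φ t)
    rw [sub_mul, mul_sub, smul_mul_assoc, mul_smul_comm, mul_assoc]
  rw [hJ2, hrw1, hpt] at hP1
  rw [hJ1, hrw2] at hP2
  -- Lagrange bilinear identity
  have hE : Φs' Real.pi * Φ Real.pi - Φs Real.pi * Φ' Real.pi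
      = Φs' 0 * Φ 0 - Φs 0 * Φ' 0 := by
    have h6 : (Φs' Real.pi - Φs' 0) * Φ Real.pi - Φs Real.pi * (Φ' Real.pi - Φ' 0)
        = ((∫ t in Ioc (0:ℝ) Real.pi, Φs t * g1 t) + (S - Φs' 0 * (Φ Real.pi - Φ 0)))
          - ((∫ t in Ioc (0:ℝ) Real.pi, Φs t * g1 t)
              + (S - (Φs Real.pi - Φs 0) * Φ' 0)) := by
      rw [← hP1, ← hP2]
    have h7 : (Φs' Real.pi - Φs' 0) * Φ Real.pi - Φs Real.pi * (Φ' Real.pi - Φ' 0)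
        = (Φs Real.pi - Φs 0) * Φ' 0 - Φs' 0 * (Φ Real.pi - Φ 0) := by
      rw [h6]; abel
    rw [sub_mul, mul_sub, sub_mul, mul_sub] at h7
    have key : Φs' Real.pi * Φ Real.pi - Φs Real.pi * Φ' Real.pi
        - (Φs' 0 * Φ 0 - Φs 0 * Φ' 0)
        = (Φs' Real.pi * Φ Real.pi - Φs' 0 * Φ Real.pi
            - (Φs Real.pi * Φ' Real.pi - Φs Real.pi * Φ' 0))
          - (Φs Real.pi * Φ' 0 - Φs 0 * Φ' 0
            - (Φs' 0 * Φ Real.pi - Φs' 0 * Φ 0)) := by abel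
    have h8 : Φs' Real.pi * Φ Real.pi - Φs Real.pi * Φ' Real.pi
        - (Φs' 0 * Φ 0 - Φs 0 * Φ' 0) = 0 := by
      rw [key, h7, sub_self]
    exact sub_eq_zero.mp h8
  -- boundary conditions kill the π side
  have hbπ : Φs' Real.pi * Φ Real.pi - Φs Real.pi * Φ' Real.pi = 0 := by
    have hd' : Φs' Real.pi = -(Φs Real.pi * H) := eq_neg_of_add_eq_zero_left hΦsV
    have hb' : Φ' Real.pi = -(H * Φ Real.pi) := eq_neg_of_add_eq_zero_left hΦV
    rw [hd', hb', neg_mul, mul_neg, sub_neg_eq_add, mul_assoc]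
    abel
  -- boundary conditions at 0
  have hc' : Φs' 0 = 1 + Φs 0 * h := sub_eq_iff_eq_add.mp hΦsU
  have ha' : Φ' 0 = 1 + h * Φ 0 := sub_eq_iff_eq_add.mp hΦU
  have hfin : Φs' 0 * Φ 0 - Φs 0 * Φ' 0 = 0 := by rw [← hE, hbπ]
  rw [hc', ha', add_mul, one_mul, mul_add, mul_one] at hfin
  have key2 : Φ 0 - Φs 0
      = Φ 0 + Φs 0 * h * Φ 0 - (Φs 0 + Φs 0 * (h * Φ 0)) := by
    rw [mul_assoc]; abel
  exact sub_eq_zero.mp (key2.trans hfin)
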